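/- Let κ > 0, μ > 0, m > 0 and h̄ > 0 with θ₁ = h̄/(μ(1+κ)) and θ₂ = (μκ+m)h̄/(μ(1+κ)m), and suppose μκ < m (so that the Gauss hypergeometric series below converges). Then for every real j > 0, the j-th moment of the κ-μ shadowed density satisfies ∫₀^∞ x^j f(x) dx = (θ₁^{m−μ} Γ(μ+j) / (θ₂^{m−μ−j} Γ(μ))) · ₂F₁(μ−m, μ+j; μ; −μκ/m). -/

import Mathlib

open Real MeasureTheory Set Filter

/-- Pochhammer symbol `(a)_n = Γ(a+n)/Γ(a)`. -/
noncomputable def poch (a : ℝ) : ℕ → ℝ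
  | 0 => 1
  | n + 1 => poch a n * (a + n)

/-- Confluent hypergeometric function `₁F₁(a; b; x) = Σ ((a)_n/(b)_n) xⁿ/n!`. -/
noncomputable def hyp1F1 (a b x : ℝ) : ℝ :=
  ∑' n : ℕ, (poch a n / poch b n) * x ^ n / n.factorial

/-- Gauss hypergeometric function `₂F₁(a, b; c; x) = Σ ((a)_n (b)_n/(c)_n) xⁿ/n!`. -/
noncomputable def hyp2F1 (a b c x : ℝ) : ℝ :=
  ∑' n : ℕ, (poch a n * poch b n / poch c n) * x ^ n / n.factorial

/-- The κ-μ shadowed probability density on `(0, ∞)`, with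
`θ₁ = h̄/(μ(1+κ))` and `θ₂ = (μκ+m)h̄/(μ(1+κ)m)`:
`f(x) = (θ₁^(m−μ)/(θ₂^m Γ(μ))) x^(μ−1) e^(−x/θ₁) ₁F₁(m; μ; ((θ₂−θ₁)/(θ₁θ₂)) x)`. -/
lemma poch_zero (a : ℝ) : poch a 0 = 1 := rfl
lemma poch_succ (a : ℝ) (n : ℕ) : poch a (n + 1) = poch a n * (a + n) := rfl

lemma poch_pos {a : ℝ} (ha : 0 < a) (n : ℕ) : 0 < poch a n := by
  induction n with
  | zero => norm_num [poch]
  | succ n ih => exact mul_pos ih (by positivity)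

lemma poch_succ_left (a : ℝ) (n : ℕ) : poch a (n + 1) = a * poch (a + 1) n := by
  induction n generalizing a with
  | zero => simp [poch]
  | succ n ih => rw [poch_succ, ih, poch_succ]; push_cast; ring

lemma poch_add (a : ℝ) (k l : ℕ) : poch a (k + l) = poch a k * poch (a + k) l := by
  induction l with
  | zero => simp [poch]
  | succ l ih =>
      have : k + (l + 1) = (k + l) + 1 := by ring
      rw [this, poch_succ, ih, poch_succ]
      push_cast; ring

/-- local abbreviation for smeval of descPochhammer -/
noncomputable def dpoch (t : ℝ) (n : ℕ) : ℝ := Polynomial.smeval (descPochhammer ℤ n) t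

lemma dpoch_zero (t : ℝ) : dpoch t 0 = 1 := by
  simp [dpoch, descPochhammer_zero, Polynomial.smeval_one]

lemma dpoch_succ (t : ℝ) (n : ℕ) : dpoch t (n + 1) = dpoch t n * (t - n) := by
  rw [dpoch, descPochhammer_succ_right, Polynomial.smeval_mul, Polynomial.smeval_sub,
    Polynomial.smeval_X, Polynomial.smeval_natCast]
  simp [dpoch]

lemma poch_eq_dpoch (a : ℝ) (n : ℕ) : poch a n = dpoch (a + n - 1) n := by
  induction n generalizing a with
  | zero => simp [poch_zero, dpoch_zero]
  | succ n ih =>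
      rw [poch_succ_left, dpoch_succ, ih (a + 1)]
      push_cast
      have h1 : a + 1 + (n : ℝ) - 1 = a + (n + 1) - 1 := by ring
      have h2 : a + ((n : ℝ) + 1) - 1 - n = a := by ring
      rw [h1, h2]
      ring

lemma dpoch_neg (c : ℝ) (k : ℕ) : dpoch (-c) k = (-1) ^ k * poch c k := by
  induction k with
  | zero => simp [dpoch_zero, poch_zero]
  | succ k ih => rw [dpoch_succ, ih, poch_succ, pow_succ]; ring

/-- Chu–Vandermonde for `poch`. -/
lemma poch_vdm (b c : ℝ) (n : ℕ) :
    ∑ kl ∈ Finset.HasAntidiagonal.antidiagonal n,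
      (n.choose kl.1 : ℝ) * (poch (b + kl.2) kl.1 * ((-1) ^ kl.2 * poch c kl.2))
      = poch (b - c) n := by
  have h := Ring.descPochhammer_smeval_add (R := ℝ) (r := b + n - 1) (s := -c) n (Commute.all _ _)
  have hL : poch (b - c) n = Polynomial.smeval (descPochhammer ℤ n) (b + (n : ℝ) - 1 + -c) := by
    rw [poch_eq_dpoch, dpoch]
    congr 1
    ring
  rw [hL, h]
  refine Finset.sum_congr rfl fun kl hkl => ?_
  have hn : kl.1 + kl.2 = n := Finset.HasAntidiagonal.mem_antidiagonal.mp hkl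
  have hcast : (kl.1 : ℝ) + kl.2 = n := by exact_mod_cast congrArg Nat.cast hn
  have h1 : poch (b + kl.2) kl.1 = dpoch (b + (n : ℝ) - 1) kl.1 := by
    rw [poch_eq_dpoch]
    congr 1
    linarith
  have h2 : ((-1 : ℝ)) ^ kl.2 * poch c kl.2 = dpoch (-c) kl.2 := (dpoch_neg c kl.2).symm
  rw [h1, h2, dpoch, dpoch]

lemma tendsto_ratio_aux (a b : ℝ) :
    Tendsto (fun n : ℕ => (a + n) / (b + n)) atTop (nhds 1) := by
  have hbn : Tendsto (fun n : ℕ => b + (n : ℝ)) atTop atTop :=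
    tendsto_atTop_add_const_left _ b tendsto_natCast_atTop_atTop
  have h0 : Tendsto (fun n : ℕ => (a - b) / (b + n)) atTop (nhds 0) :=
    tendsto_const_nhds.div_atTop hbn
  have h1 : Tendsto (fun n : ℕ => 1 + (a - b) / (b + n)) atTop (nhds 1) := by
    simpa using (tendsto_const_nhds (x := (1:ℝ))).add h0
  refine h1.congr' ?_
  filter_upwards [hbn.eventually_gt_atTop 0] with n hn
  field_simp
  ring

lemma tendsto_ratio_abs (a b : ℝ) :
    Tendsto (fun n : ℕ => |a + n| / (b + n)) atTop (nhds 1) := by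
  refine (tendsto_ratio_aux a b).congr' ?_
  filter_upwards [eventually_ge_atTop ⌈|a|⌉₊] with n hn
  have h1 : |a| ≤ (n : ℝ) := le_trans (Nat.le_ceil _) (by exact_mod_cast hn)
  have h2 : 0 ≤ a + n := by linarith [neg_abs_le a]
  rw [abs_of_nonneg h2]

lemma summable_ratio {f g : ℕ → ℝ} {L : ℝ} (hfg : ∀ n, |f (n + 1)| = g n * |f n|)
    (hg : Tendsto g atTop (nhds L)) (hL : L < 1) : Summable f := by
  have hr : (L + 1) / 2 < 1 := by linarith
  refine summable_of_ratio_norm_eventually_le hr ?_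
  filter_upwards [hg.eventually_lt_const (show L < (L + 1) / 2 by linarith)] with n hn
  rw [Real.norm_eq_abs, Real.norm_eq_abs, hfg n]
  exact mul_le_mul_of_nonneg_right hn.le (abs_nonneg _)

/-- Absolute summability of the ₁F₁ series (entire). -/
lemma summable_abs_oneF1 (a : ℝ) {b : ℝ} (hb : 0 < b) (x : ℝ) :
    Summable (fun n : ℕ => |poch a n / poch b n * x ^ n / n.factorial|) := by
  set f : ℕ → ℝ := fun n => poch a n / poch b n * x ^ n / n.factorial with hf
  have key : Summable f := by
    refine summable_ratio (L := 0)
      (g := fun n : ℕ => |a + n| / (b + n) * (|x| / (1 + n))) ?_ ?_ (by norm_num)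
    · intro n
      have hbn : (0:ℝ) < b + n := by positivity
      have hn1 : (0:ℝ) < 1 + (n:ℕ) := by positivity
      have hfac : ((n.factorial : ℝ)) ≠ 0 := by
        exact_mod_cast n.factorial_ne_zero
      have hpb : poch b n ≠ 0 := (poch_pos hb n).ne'
      have hstep : f (n + 1) = f n * ((a + n) / (b + n) * (x / (1 + n))) := by
        rw [hf]
        simp only [poch_succ, Nat.factorial_succ, pow_succ]
        push_cast
        field_simp
        ring
      rw [hstep]
      simp only [abs_mul, abs_div, abs_of_pos hbn, abs_of_pos hn1]
      ring
    · have h1 := tendsto_ratio_abs a b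
      have h2 : Tendsto (fun n : ℕ => |x| / (1 + (n:ℝ))) atTop (nhds 0) :=
        tendsto_const_nhds.div_atTop
          (tendsto_atTop_add_const_left _ 1 tendsto_natCast_atTop_atTop)
      simpa using h1.mul h2
  exact key.abs

/-- Absolute summability of the ₂F₁-type series for `|x| < 1`. -/
lemma summable_abs_twoF1 (a : ℝ) {b c x : ℝ} (hb : 0 < b) (hc : 0 < c) (hx : |x| < 1) :
    Summable (fun n : ℕ => |poch a n * poch c n / poch b n * x ^ n / n.factorial|) := by
  set f : ℕ → ℝ := fun n => poch a n * poch c n / poch b n * x ^ n / n.factorial with hf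
  have key : Summable f := by
    refine summable_ratio
      (g := fun n : ℕ => |a + n| / (b + n) * ((c + n) / (1 + n)) * |x|) ?_ ?_ hx
    · intro n
      have hbn : (0:ℝ) < b + n := by positivity
      have hcn : (0:ℝ) < c + n := by positivity
      have hn1 : (0:ℝ) < 1 + (n:ℕ) := by positivity
      have hfac : ((n.factorial : ℝ)) ≠ 0 := by exact_mod_cast n.factorial_ne_zero
      have hpb : poch b n ≠ 0 := (poch_pos hb n).ne'
      have hstep : f (n + 1)
          = f n * ((a + n) / (b + n) * ((c + n) / (1 + n)) * x) := by
        rw [hf]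
        simp only [poch_succ, Nat.factorial_succ, pow_succ]
        push_cast
        field_simp
        ring
      rw [hstep]
      simp only [abs_mul, abs_div, abs_of_pos hbn, abs_of_pos hn1, abs_of_pos hcn]
      ring
    · have h1 := tendsto_ratio_abs a b
      have h2 := tendsto_ratio_aux c 1
      have h3 : Tendsto (fun _ : ℕ => |x|) atTop (nhds |x|) := tendsto_const_nhds
      simpa using (h1.mul h2).mul h3
  exact key.abs


/-- Kummer's transformation. -/
lemma kummer (a : ℝ) {b : ℝ} (hb : 0 < b) (y : ℝ) :
    hyp1F1 a b y = Real.exp y * hyp1F1 (b - a) b (-y) := by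
  have hfnorm : Summable fun k : ℕ => ‖y ^ k / (k.factorial : ℝ)‖ := by
    refine Summable.congr (Real.summable_pow_div_factorial |y|) fun k => ?_
    rw [Real.norm_eq_abs, abs_div, abs_pow]
    congr 1
    exact (abs_of_pos (by exact_mod_cast k.factorial_pos)).symm
  have hgnorm : Summable fun n : ℕ =>
      ‖poch (b - a) n / poch b n * (-y) ^ n / n.factorial‖ := by
    simpa only [Real.norm_eq_abs] using summable_abs_oneF1 (b - a) hb (-y)
  rw [hyp1F1, hyp1F1, Real.exp_eq_exp_ℝ, NormedSpace.exp_eq_tsum_div,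
    tsum_mul_tsum_eq_tsum_sum_antidiagonal_of_summable_norm hfnorm hgnorm]
  refine tsum_congr fun n => ?_
  have hkey : ∀ kl ∈ Finset.HasAntidiagonal.antidiagonal n,
      y ^ kl.1 / (kl.1.factorial : ℝ) *
        (poch (b - a) kl.2 / poch b kl.2 * (-y) ^ kl.2 / kl.2.factorial)
      = ((n.choose kl.1 : ℝ) * (poch (b + kl.2) kl.1 * ((-1) ^ kl.2 * poch (b - a) kl.2)))
          * (y ^ n / (poch b n * n.factorial)) := by
    rintro ⟨k, l⟩ hkl
    have hn : k + l = n := Finset.HasAntidiagonal.mem_antidiagonal.mp hkl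
    subst hn
    simp only
    have h1 : poch b (k + l) = poch b l * poch (b + l) k := by
      rw [add_comm]; exact poch_add b l k
    have h2 := Nat.choose_mul_factorial_mul_factorial (Nat.le_add_right k l)
    rw [Nat.add_sub_cancel_left] at h2
    have h2c : (((k + l).factorial : ℕ) : ℝ)
        = ((k + l).choose k : ℝ) * k.factorial * l.factorial := by
      exact_mod_cast h2.symm
    have hpbl : poch b l ≠ 0 := (poch_pos hb l).ne'
    have hpblk : poch (b + l) k ≠ 0 := (poch_pos (by positivity) k).ne'
    have hkf : ((k.factorial : ℕ) : ℝ) ≠ 0 := by exact_mod_cast k.factorial_ne_zero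
    have hlf : ((l.factorial : ℕ) : ℝ) ≠ 0 := by exact_mod_cast l.factorial_ne_zero
    have hch : (((k + l).choose k : ℕ) : ℝ) ≠ 0 := by
      exact_mod_cast (Nat.choose_pos (Nat.le_add_right k l)).ne'
    rw [h1, h2c, neg_pow, pow_add]
    field_simp
  rw [Finset.sum_congr rfl hkey, ← Finset.sum_mul, poch_vdm, sub_sub_cancel]
  have hpbn : poch b n ≠ 0 := (poch_pos hb n).ne'
  have hnf : ((n.factorial : ℕ) : ℝ) ≠ 0 := by exact_mod_cast n.factorial_ne_zero
  field_simp

lemma Gamma_poch {s : ℝ} (hs : 0 < s) (n : ℕ) :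
    Real.Gamma (s + n) = Real.Gamma s * poch s n := by
  induction n with
  | zero => simp [poch_zero]
  | succ n ih =>
      have h1 : s + ((n : ℝ) + 1) = (s + n) + 1 := by ring
      push_cast
      rw [h1, Real.Gamma_add_one (by positivity), ih, poch_succ]
      ring

lemma integrableOn_rpow_exp {a r : ℝ} (ha : 0 < a) (hr : 0 < r) :
    IntegrableOn (fun x : ℝ => x ^ (a - 1) * Real.exp (-(r * x))) (Ioi 0) := by
  have h0 := Real.GammaIntegral_convergent ha
  have h1 : IntegrableOn (fun x : ℝ => Real.exp (-(r * x)) * (r * x) ^ (a - 1)) (Ioi 0) := by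
    have h2 := integrableOn_Ioi_comp_mul_left_iff
      (fun x : ℝ => Real.exp (-x) * x ^ (a - 1)) 0 hr
    rw [mul_zero] at h2
    exact h2.mpr h0
  have h3 : IntegrableOn
      (fun x : ℝ => (r ^ (a - 1))⁻¹ * (Real.exp (-(r * x)) * (r * x) ^ (a - 1))) (Ioi 0) :=
    h1.const_mul _
  refine h3.congr_fun (fun x hx => ?_) measurableSet_Ioi
  have hx0 : (0:ℝ) < x := hx
  have hrp : (0:ℝ) < r ^ (a - 1) := Real.rpow_pos_of_pos hr _
  beta_reduce
  rw [Real.mul_rpow hr.le hx0.le]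
  field_simp


noncomputable def kmuPDF (κ μ m hbar x : ℝ) : ℝ :=
  (hbar / (μ * (1 + κ))) ^ (m - μ) /
      (((μ * κ + m) * hbar / (μ * (1 + κ) * m)) ^ m * Real.Gamma μ) *
    x ^ (μ - 1) * Real.exp (-x / (hbar / (μ * (1 + κ)))) *
    hyp1F1 m μ
      (((((μ * κ + m) * hbar / (μ * (1 + κ) * m)) - hbar / (μ * (1 + κ))) /
        ((hbar / (μ * (1 + κ))) * ((μ * κ + m) * hbar / (μ * (1 + κ) * m)))) * x)

/-- The j-th moment of the κ-μ shadowed density: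
`∫₀^∞ x^j f(x) dx = (θ₁^(m−μ) Γ(μ+j)/(θ₂^(m−μ−j) Γ(μ))) ₂F₁(μ−m, μ+j; μ; −μκ/m)`. -/
theorem kmu_moment (κ μ m hbar : ℝ) (hκ : 0 < κ) (hμ : 0 < μ) (hm : 0 < m)
    (hhbar : 0 < hbar) (θ1 θ2 : ℝ) (hθ1 : θ1 = hbar / (μ * (1 + κ)))
    (hθ2 : θ2 = (μ * κ + m) * hbar / (μ * (1 + κ) * m))
    (hconv : μ * κ < m) (j : ℝ) (hj : 0 < j) :
    (∫ x in Set.Ioi (0 : ℝ), x ^ j * kmuPDF κ μ m hbar x)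
      = θ1 ^ (m - μ) * Real.Gamma (μ + j) / (θ2 ^ (m - μ - j) * Real.Gamma μ) *
        hyp2F1 (μ - m) (μ + j) μ (-(μ * κ) / m) := by
  have hκ1 : (0:ℝ) < 1 + κ := by linarith
  have hθ1p : 0 < θ1 := by rw [hθ1]; positivity
  have hθ2p : 0 < θ2 := by rw [hθ2]; positivity
  set c : ℝ := (θ2 - θ1) / (θ1 * θ2) with hcdef
  have hθ1ne : θ1 ≠ 0 := hθ1p.ne'
  have hθ2ne : θ2 ≠ 0 := hθ2p.ne'
  have hcθ2 : c * θ2 = μ * κ / m := by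
    rw [hcdef, hθ1, hθ2]
    field_simp
    ring
  have hcx : ∀ x : ℝ, -x / θ1 + c * x = -(θ2⁻¹ * x) := by
    intro x
    rw [hcdef]
    field_simp
    ring
  set K : ℝ := θ1 ^ (m - μ) / (θ2 ^ m * Real.Gamma μ) with hK
  set d : ℕ → ℝ := fun n => poch (μ - m) n / poch μ n * (-c) ^ n / n.factorial with hd
  set F : ℕ → ℝ → ℝ :=
    fun n x => (K * d n) * (x ^ (μ + j + n - 1) * Real.exp (-(θ2⁻¹ * x))) with hF
  have hq : |-(c * θ2)| < 1 := by
    rw [abs_neg, hcθ2, abs_of_pos (by positivity), div_lt_one hm]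
    exact hconv
  -- pointwise identification of the integrand with the series
  have hpdf : ∀ x ∈ Ioi (0:ℝ), x ^ j * kmuPDF κ μ m hbar x = ∑' n, F n x := by
    intro x hx
    have hx0 : (0:ℝ) < x := hx
    rw [kmuPDF, ← hθ1, ← hθ2, ← hcdef, ← hK, kummer m hμ (c * x), hyp1F1]
    rw [show x ^ j * (K * x ^ (μ - 1) * Real.exp (-x / θ1) *
          (Real.exp (c * x) * ∑' n : ℕ,
            poch (μ - m) n / poch μ n * (-(c * x)) ^ n / n.factorial))
        = (x ^ j * K * x ^ (μ - 1) * (Real.exp (-x / θ1) * Real.exp (c * x))) *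
          ∑' n : ℕ, poch (μ - m) n / poch μ n * (-(c * x)) ^ n / n.factorial from by ring]
    rw [← tsum_mul_left]
    refine tsum_congr fun n => ?_
    have hxp : x ^ j * x ^ (μ - 1) * x ^ (n : ℕ) = x ^ (μ + j + n - 1) := by
      rw [← Real.rpow_natCast x n, ← Real.rpow_add hx0, ← Real.rpow_add hx0]
      congr 1
      ring
    have hexp : Real.exp (-x / θ1) * Real.exp (c * x) = Real.exp (-(θ2⁻¹ * x)) := by
      rw [← Real.exp_add, hcx x]
    simp only [hF, hd]
    rw [← hexp, ← hxp, show (-(c * x) : ℝ) = (-c) * x from by ring, mul_pow]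
    ring
  rw [setIntegral_congr_fun measurableSet_Ioi hpdf]
  -- interchange sum and integral
  have hInt : ∀ n : ℕ, Integrable (F n) (volume.restrict (Ioi 0)) := by
    intro n
    have h := (integrableOn_rpow_exp (a := μ + j + n) (by positivity)
      (inv_pos.mpr hθ2p)).const_mul (K * d n)
    exact h
  have hval : ∀ n : ℕ,
      (∫ x in Ioi (0:ℝ), F n x)
        = (K * d n) * (θ2 ^ (μ + j + (n:ℝ)) * Real.Gamma (μ + j + n)) := by
    intro n
    simp only [hF]
    rw [MeasureTheory.integral_const_mul,
      integral_rpow_mul_exp_neg_mul_Ioi (by positivity) (inv_pos.mpr hθ2p),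
      one_div, inv_inv]
  have hnorm : ∀ n : ℕ,
      (∫ x in Ioi (0:ℝ), ‖F n x‖)
        = |K * d n| * (θ2 ^ (μ + j + (n:ℝ)) * Real.Gamma (μ + j + n)) := by
    intro n
    have heq : ∀ x ∈ Ioi (0:ℝ),
        ‖F n x‖ = |K * d n| * (x ^ (μ + j + n - 1) * Real.exp (-(θ2⁻¹ * x))) := by
      intro x hx
      have hx0 : (0:ℝ) < x := hx
      simp only [hF, Real.norm_eq_abs, abs_mul]
      rw [abs_of_pos (Real.rpow_pos_of_pos hx0 _), abs_of_pos (Real.exp_pos _)]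
    rw [setIntegral_congr_fun measurableSet_Ioi heq, MeasureTheory.integral_const_mul,
      integral_rpow_mul_exp_neg_mul_Ioi (by positivity) (inv_pos.mpr hθ2p),
      one_div, inv_inv]
  have hSum : Summable fun n : ℕ => ∫ x in Ioi (0:ℝ), ‖F n x‖ := by
    have hs : Summable fun n : ℕ =>
        (|K| * (θ2 ^ (μ + j) * Real.Gamma (μ + j))) *
          |poch (μ - m) n * poch (μ + j) n / poch μ n * (-(c * θ2)) ^ n / n.factorial| :=
      (summable_abs_twoF1 (μ - m) hμ (by positivity) hq).mul_left _
    refine hs.congr fun n => ?_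
    rw [hnorm n]
    have htn : (poch (μ - m) n * poch (μ + j) n / poch μ n * (-(c * θ2)) ^ n / n.factorial : ℝ)
        = d n * (poch (μ + j) n * θ2 ^ (n:ℕ)) := by
      simp only [hd]
      rw [show (-(c * θ2) : ℝ) = (-c) * θ2 from by ring, mul_pow]
      ring
    rw [htn, abs_mul, abs_mul,
      abs_of_pos (poch_pos (show (0:ℝ) < μ + j by positivity) n),
      abs_of_pos (pow_pos hθ2p n),
      show θ2 ^ (μ + j + (n:ℝ)) = θ2 ^ (μ + j) * θ2 ^ (n:ℕ) from by
        rw [Real.rpow_add hθ2p, Real.rpow_natCast],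
      Gamma_poch (show (0:ℝ) < μ + j by positivity) n, abs_mul]
    ring
  rw [← MeasureTheory.integral_tsum_of_summable_integral_norm hInt hSum]
  -- evaluate the resulting series
  rw [tsum_congr hval]
  have hfinal : ∀ n : ℕ,
      (K * d n) * (θ2 ^ (μ + j + (n:ℝ)) * Real.Gamma (μ + j + n))
        = (θ1 ^ (m - μ) * Real.Gamma (μ + j) / (θ2 ^ (m - μ - j) * Real.Gamma μ)) *
          ((poch (μ - m) n * poch (μ + j) n / poch μ n) * (-(μ * κ) / m) ^ n / n.factorial) := by
    intro n
    have hz : (-(μ * κ) / m : ℝ) = (-c) * θ2 := by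
      rw [neg_div, ← hcθ2]
      ring
    have hθ2pow : θ2 ^ m = θ2 ^ (m - μ - j) * θ2 ^ (μ + j) := by
      rw [← Real.rpow_add hθ2p]
      congr 1
      ring
    simp only [hK, hd]
    rw [hz, mul_pow,
      show θ2 ^ (μ + j + (n:ℝ)) = θ2 ^ (μ + j) * θ2 ^ (n:ℕ) from by
        rw [Real.rpow_add hθ2p, Real.rpow_natCast],
      Gamma_poch (show (0:ℝ) < μ + j by positivity) n, hθ2pow]
    have h1 : Real.Gamma μ ≠ 0 := (Real.Gamma_pos_of_pos hμ).ne'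
    have h2 : θ2 ^ (m - μ - j) ≠ 0 := (Real.rpow_pos_of_pos hθ2p _).ne'
    have h3 : θ2 ^ (μ + j) ≠ 0 := (Real.rpow_pos_of_pos hθ2p _).ne'
    have h4 : poch μ n ≠ 0 := (poch_pos hμ n).ne'
    have h5 : ((n.factorial : ℕ) : ℝ) ≠ 0 := by exact_mod_cast n.factorial_ne_zero
    field_simp
  rw [tsum_congr hfinal, tsum_mul_left, hyp2F1]
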